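/- Periodic solution of the backward variance equation (equations (fpu5)–(fpu7)). The function v̂per₊ is T-periodic, continuously differentiable, and satisfies the differential equation v̂per₊′(s) = 2a(s) v̂per₊(s) − g(s)² for all s. Moreover, for all t ≥ s one has the relation v̂₊(t,s) = v̂per₊(s) − e^{−2α(t,s)} v̂per₊(t). -/

import Mathlib

open MeasureTheory intervalIntegral

/-- Periodic solution of the backward variance equation (equations (fpu5)–(fpu7)). -/
theorem periodic_backward_variance
    (T : ℝ) (hT : 0 < T) (a g : ℝ → ℝ)
    (ha : Continuous a) (hg : Continuous g)
    (haper : ∀ t, a (t + T) = a t) (hgper : ∀ t, g (t + T) = g t)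
    (a0 g0 : ℝ) (ha0 : 0 < a0) (hg0 : 0 < g0)
    (halb : ∀ t, a0 ≤ a t) (hglb : ∀ t, g0 ≤ g t)
    (α : ℝ → ℝ) (hα : ∀ t, α t = ∫ u in (0:ℝ)..t, a u)
    (lam : ℝ) (hlam : lam = α T / T)
    (vhatper : ℝ → ℝ)
    (hvhatper : ∀ t, vhatper t = (Real.exp (2 * lam * T) - 1)⁻¹ *
      ∫ s in t..t + T, Real.exp (2 * (α (t + T) - α s)) * g s ^ 2)
    (vhat : ℝ → ℝ → ℝ)
    (hvhat : ∀ t s, vhat t s = ∫ u in s..t, Real.exp (-2 * (α u - α s)) * g u ^ 2) :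
    (∀ s, vhatper (s + T) = vhatper s)
    ∧ (∀ s, HasDerivAt vhatper (2 * a s * vhatper s - g s ^ 2) s)
    ∧ Continuous (fun s => 2 * a s * vhatper s - g s ^ 2)
    ∧ (∀ s t, s ≤ t →
        vhat t s = vhatper s - Real.exp (-2 * (α t - α s)) * vhatper t) := by
  -- basic facts about α
  have hαder : ∀ t, HasDerivAt α (a t) t := by
    intro t
    have h : HasDerivAt (fun u => ∫ x in (0:ℝ)..u, a x) (a t) t :=
      intervalIntegral.integral_hasDerivAt_right (ha.intervalIntegrable _ _)
        (ha.stronglyMeasurableAtFilter _ _) ha.continuousAt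
    have : α = fun u => ∫ x in (0:ℝ)..u, a x := funext hα
    rw [this]; exact h
  have hαc : Continuous α := by
    rw [continuous_iff_continuousAt]; exact fun t => (hαder t).continuousAt
  have hαadd : ∀ t, α (t + T) = α t + α T := by
    intro t
    have hper : Function.Periodic a T := haper
    have h1 : ∫ x in t..t+T, a x = ∫ x in (0:ℝ)..0+T, a x :=
      hper.intervalIntegral_add_eq t 0
    have h2 : α (t + T) = α t + ∫ x in t..t+T, a x := by
      rw [hα, hα t, ← intervalIntegral.integral_add_adjacent_intervals
        (ha.intervalIntegrable 0 t) (ha.intervalIntegrable t (t+T))]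
    rw [h2, h1, hα T]; norm_num
  have hαTpos : 0 < α T := by
    rw [hα]
    calc (0:ℝ) < a0 * T := by positivity
    _ = ∫ _ in (0:ℝ)..T, a0 := by simp [mul_comm]
    _ ≤ ∫ u in (0:ℝ)..T, a u :=
        intervalIntegral.integral_mono_on hT.le (intervalIntegrable_const)
          (ha.intervalIntegrable _ _) (fun x _ => halb x)
  have hlamT : 2 * lam * T = 2 * α T := by
    rw [hlam]; field_simp
  set c : ℝ := Real.exp (2 * α T) - 1 with hc
  have hcpos : 0 < c := by
    have : (1:ℝ) < Real.exp (2 * α T) := Real.one_lt_exp_iff.mpr (by linarith)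
    linarith
  have hcne : c ≠ 0 := ne_of_gt hcpos
  -- the function G
  set f : ℝ → ℝ := fun u => Real.exp (-(2 * α u)) * g u ^ 2 with hf
  have hfc : Continuous f := ((continuous_const.mul hαc).neg.rexp).mul (hg.pow 2)
  set G : ℝ → ℝ := fun t => ∫ u in (0:ℝ)..t, f u with hG
  have hGder : ∀ t, HasDerivAt G (f t) t := fun t =>
    intervalIntegral.integral_hasDerivAt_right (hfc.intervalIntegrable _ _)
      (hfc.stronglyMeasurableAtFilter _ _) hfc.continuousAt
  have hGc : Continuous G := by
    rw [continuous_iff_continuousAt]; exact fun t => (hGder t).continuousAt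
  -- Φ is constant
  set K : ℝ := G (0 + T) - Real.exp (-(2 * α T)) * G 0 with hK
  have hGshift : ∀ t, G (t + T) = Real.exp (-(2 * α T)) * G t + K := by
    have hΦder : ∀ t, HasDerivAt (fun t => G (t + T) - Real.exp (-(2 * α T)) * G t) 0 t := by
      intro t
      have h1 : HasDerivAt (fun t => G (t + T)) (f (t + T)) t := by
        exact (hGder (t + T)).comp_add_const t T
      have h2 := ((hGder t).const_mul (Real.exp (-(2 * α T))))
      have := h1.fun_sub h2
      refine this.congr_deriv ?_
      simp only [hf, hgper, hαadd]
      rw [show -(2 * (α t + α T)) = -(2 * α t) + -(2 * α T) by ring, Real.exp_add]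
      ring
    have hconst : ∀ t s : ℝ, (fun t => G (t + T) - Real.exp (-(2 * α T)) * G t) t
        = (fun t => G (t + T) - Real.exp (-(2 * α T)) * G t) s := by
      intro t s
      exact is_const_of_deriv_eq_zero (fun x => (hΦder x).differentiableAt)
        (fun x => (hΦder x).deriv) t s
    intro t
    have := hconst t 0
    simp only at this
    rw [hK]; linarith
  have hGdiff : ∀ x y : ℝ, ∫ u in x..y, f u = G y - G x := by
    intro x y
    have h := intervalIntegral.integral_add_adjacent_intervals
      (hfc.intervalIntegrable (μ := volume) 0 x) (hfc.intervalIntegrable (μ := volume) x y)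
    show ∫ u in x..y, f u = (∫ u in (0:ℝ)..y, f u) - ∫ u in (0:ℝ)..x, f u
    linarith
  -- closed form for vhatper
  have hclosed : ∀ t, vhatper t = c⁻¹ * Real.exp (2 * α T) * K * Real.exp (2 * α t)
      - Real.exp (2 * α t) * G t := by
    intro t
    have hint : ∫ s in t..t + T, Real.exp (2 * (α (t + T) - α s)) * g s ^ 2
        = Real.exp (2 * α (t + T)) * (G (t + T) - G t) := by
      have h1 : ∀ s, Real.exp (2 * (α (t + T) - α s)) * g s ^ 2
          = Real.exp (2 * α (t + T)) * f s := by
        intro s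
        rw [hf]
        rw [show 2 * (α (t + T) - α s) = 2 * α (t + T) + -(2 * α s) by ring, Real.exp_add]
        ring
      rw [intervalIntegral.integral_congr (fun s _ => h1 s),
        intervalIntegral.integral_const_mul]
      congr 1
      exact hGdiff t (t+T)
    rw [hvhatper, hlamT, hint, hGshift, hαadd,
      show 2 * (α t + α T) = 2 * α t + 2 * α T by ring, Real.exp_add, Real.exp_neg, hc]
    have hE1 : Real.exp (2 * α T) - 1 ≠ 0 := hcne
    field_simp
    ring
  -- now the four claims
  have hper : ∀ s, vhatper (s + T) = vhatper s := by
    intro s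
    rw [hclosed, hclosed s, hαadd, hGshift,
      show 2 * (α s + α T) = 2 * α s + 2 * α T by ring, Real.exp_add, Real.exp_neg, hc]
    have hE1 : Real.exp (2 * α T) - 1 ≠ 0 := hcne
    field_simp
    ring
  refine ⟨hper, ?_, ?_, ?_⟩
  · intro s
    have hvfun : vhatper = fun t => c⁻¹ * Real.exp (2 * α T) * K * Real.exp (2 * α t)
        - Real.exp (2 * α t) * G t := funext hclosed
    rw [hvfun]
    have hE : HasDerivAt (fun t => Real.exp (2 * α t)) (2 * a s * Real.exp (2 * α s)) s := by
      have := ((hαder s).const_mul 2).exp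
      convert this using 1; ring
    have hD := ((hE.const_mul (c⁻¹ * Real.exp (2 * α T) * K)).fun_sub (hE.fun_mul (hGder s)))
    refine hD.congr_deriv ?_
    simp only [hf]
    beta_reduce
    rw [Real.exp_neg, hc]
    have hE1 : Real.exp (2 * α T) - 1 ≠ 0 := hcne
    field_simp
    ring
  · have hvfun : vhatper = fun t => c⁻¹ * Real.exp (2 * α T) * K * Real.exp (2 * α t)
        - Real.exp (2 * α t) * G t := funext hclosed
    rw [hvfun]
    fun_prop
  · intro s t _
    have hint : vhat t s = Real.exp (2 * α s) * (G t - G s) := by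
      rw [hvhat]
      have h1 : ∀ u, Real.exp (-2 * (α u - α s)) * g u ^ 2
          = Real.exp (2 * α s) * f u := by
        intro u
        rw [hf, show -2 * (α u - α s) = 2 * α s + -(2 * α u) by ring, Real.exp_add]
        ring
      rw [intervalIntegral.integral_congr (fun u _ => h1 u),
        intervalIntegral.integral_const_mul]
      congr 1
      exact hGdiff s t
    rw [hint, hclosed, hclosed t,
      show -2 * (α t - α s) = 2 * α s + -(2 * α t) by ring, Real.exp_add, Real.exp_neg, hc]
    have hE1 : Real.exp (2 * α T) - 1 ≠ 0 := hcne
    field_simp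
    ring
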